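/- arXiv:0705.4208 — 2 statements merged into one kernel-verified Lean document; each statement's English description precedes it below -/
import Mathlib

section
/- Let R = ℚ + XQ(√2)[[X]], the subring of V = ℚ(√2)[[X]] consisting of power series with rational constant term. Then every nonzero ideal of R is principal as an ideal over its endomorphism ring, i.e., R is a stable domain, but R is not a Prüfer domain. -/
set_option synthInstance.maxHeartbeats 4000000
set_option maxHeartbeats 4000000

open scoped nonZeroDivisors

@[irreducible] noncomputable def QSqrt2 : IntermediateField ℚ ℝ :=
  IntermediateField.adjoin ℚ {(Real.sqrt 2 : ℝ)}

@[irreducible] noncomputable def QPlusM : Subring (PowerSeries QSqrt2) :=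
  Subring.comap (PowerSeries.constantCoeff (R := QSqrt2)) (algebraMap ℚ QSqrt2).range

noncomputable section Aux

open PowerSeries

unseal QSqrt2 in
lemma sqrt2_mem_QSqrt2 : Real.sqrt 2 ∈ QSqrt2 :=
  IntermediateField.subset_adjoin ℚ {(Real.sqrt 2 : ℝ)} rfl

def sF : QSqrt2 := ⟨Real.sqrt 2, sqrt2_mem_QSqrt2⟩

def qF : ℚ → QSqrt2 := algebraMap ℚ QSqrt2

lemma qF_mul (p q : ℚ) : qF (p * q) = qF p * qF q := map_mul (algebraMap ℚ QSqrt2) p q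

lemma ext_F {x y : QSqrt2} (h : (x : ℝ) = (y : ℝ)) : x = y := Subtype.ext h

@[simp] lemma qF_coe (q : ℚ) : ((qF q : QSqrt2) : ℝ) = (q : ℝ) := by
  have h := QSqrt2.val.commutes q
  simpa [qF, eq_ratCast] using h

@[simp] lemma sF_coe : ((sF : QSqrt2) : ℝ) = Real.sqrt 2 := rfl

lemma sqrt2_sq : Real.sqrt 2 * Real.sqrt 2 = 2 :=
  Real.mul_self_sqrt (by norm_num)

lemma sqrt2_not_rat (r : ℚ) : Real.sqrt 2 ≠ (r : ℝ) := fun h =>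
  irrational_sqrt_two.ne_rat r h

def Esub : Subfield ℝ where
  carrier := {x | ∃ p q : ℚ, x = (p : ℝ) + (q : ℝ) * Real.sqrt 2}
  zero_mem' := ⟨0, 0, by norm_num⟩
  one_mem' := ⟨1, 0, by norm_num⟩
  add_mem' := by
    rintro a b ⟨p, q, rfl⟩ ⟨p', q', rfl⟩
    exact ⟨p + p', q + q', by push_cast; ring⟩
  neg_mem' := by
    rintro a ⟨p, q, rfl⟩
    exact ⟨-p, -q, by push_cast; ring⟩
  mul_mem' := by
    rintro a b ⟨p, q, rfl⟩ ⟨p', q', rfl⟩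
    refine ⟨p * p' + 2 * q * q', p * q' + q * p', ?_⟩
    push_cast
    linear_combination (q : ℝ) * (q' : ℝ) * sqrt2_sq
  inv_mem' := by
    rintro a ⟨p, q, rfl⟩
    by_cases h0 : (p : ℝ) + (q : ℝ) * Real.sqrt 2 = 0
    · rw [h0]
      exact ⟨0, 0, by norm_num⟩
    · have hD : (p : ℝ) ^ 2 - 2 * (q : ℝ) ^ 2 ≠ 0 := by
        intro hD
        rcases eq_or_ne q 0 with hq | hq
        · subst hq
          have hp : (p : ℝ) = 0 := by
            have : (p : ℝ) ^ 2 = 0 := by push_cast at hD ⊢; linarith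
            exact pow_eq_zero_iff (by norm_num) |>.mp this
          apply h0; rw [hp]; push_cast; ring
        · have hq' : (q : ℝ) ≠ 0 := by exact_mod_cast hq
          have hsq : ((|p / q| : ℚ) : ℝ) ^ 2 = 2 := by
            push_cast
            rw [abs_div, div_pow, sq_abs, sq_abs]
            field_simp
            nlinarith [hD]
          apply sqrt2_not_rat |p / q|
          rw [show (2 : ℝ) = ((|p / q| : ℚ) : ℝ) ^ 2 from hsq.symm, Real.sqrt_sq_eq_abs]
          rw [abs_of_nonneg]
          positivity
      set D : ℝ := (p : ℝ) ^ 2 - 2 * (q : ℝ) ^ 2 with hDdef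
      refine ⟨p / (p ^ 2 - 2 * q ^ 2), -q / (p ^ 2 - 2 * q ^ 2), ?_⟩
      have key2 : ((p : ℝ) + q * Real.sqrt 2) * ((p : ℝ) - q * Real.sqrt 2) = D := by
        linear_combination (-(q : ℝ) ^ 2) * sqrt2_sq
      have key : ((p : ℝ) + q * Real.sqrt 2) * (((p : ℝ) - q * Real.sqrt 2) / D) = 1 := by
        rw [mul_div_assoc', key2, div_self hD]
      have hc : ((p / (p ^ 2 - 2 * q ^ 2) : ℚ) : ℝ) + ((-q / (p ^ 2 - 2 * q ^ 2) : ℚ) : ℝ) * Real.sqrt 2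
          = ((p : ℝ) - q * Real.sqrt 2) / D := by
        rw [hDdef]; push_cast; ring
      rw [hc]
      exact (eq_inv_of_mul_eq_one_left (by rw [mul_comm]; exact key)).symm

unseal QSqrt2 in
lemma QSqrt2_le_Esub : ∀ t : ℝ, t ∈ QSqrt2 → t ∈ Esub := by
  intro t ht
  have h : t ∈ Subfield.closure (Set.range (algebraMap ℚ ℝ) ∪ {Real.sqrt 2}) := ht
  refine Subfield.closure_le.mpr ?_ h
  rintro x (⟨q, rfl⟩ | rfl)
  · exact ⟨q, 0, by simp [eq_ratCast]⟩
  · exact ⟨0, 1, by simp⟩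

lemma repr_F (t : QSqrt2) : ∃ p q : ℚ, t = qF p + qF q * sF := by
  obtain ⟨p, q, h⟩ := QSqrt2_le_Esub t t.2
  exact ⟨p, q, ext_F (by push_cast; simp only [qF_coe, sF_coe]; exact h)⟩

lemma indep_F {p q : ℚ} (h : qF p + qF q * sF = 0) : p = 0 ∧ q = 0 := by
  have h' : (p : ℝ) + (q : ℝ) * Real.sqrt 2 = 0 := by
    have := congrArg (fun t : QSqrt2 => (t : ℝ)) h
    push_cast at this
    simpa using this
  have hq : q = 0 := by
    by_contra hq
    have hq' : (q : ℝ) ≠ 0 := by exact_mod_cast hq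
    apply sqrt2_not_rat (-p / q)
    push_cast
    field_simp
    linarith
  subst hq
  refine ⟨?_, rfl⟩
  have : (p : ℝ) = 0 := by push_cast at h'; linarith
  exact_mod_cast this

lemma sF_not_rat (q : ℚ) : qF q ≠ sF := by
  intro h
  have := congrArg (fun t : QSqrt2 => (t : ℝ)) h
  push_cast at this
  exact sqrt2_not_rat q this.symm

lemma sF_ne_zero : sF ≠ 0 := by
  intro h
  have := congrArg (fun t : QSqrt2 => (t : ℝ)) h
  push_cast at this
  exact (Real.sqrt_ne_zero'.mpr (by norm_num)) this

lemma solve_F {c d : QSqrt2} (hc : c ≠ 0) (hd : ∀ q : ℚ, d ≠ qF q * c) (e : QSqrt2) :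
    ∃ p q : ℚ, e = qF p * c + qF q * d := by
  obtain ⟨a, b, hcr⟩ := repr_F c
  obtain ⟨a', b', hdr⟩ := repr_F d
  obtain ⟨p0, q0, her⟩ := repr_F e
  have hdet : a * b' - b * a' ≠ 0 := by
    intro hdet
    rcases eq_or_ne a 0 with ha | ha
    · subst ha
      have hb : b ≠ 0 := by
        intro hb
        exact hc (by rw [hcr, hb]; apply ext_F; push_cast; simp [qF_coe])
      have ha' : a' = 0 := by
        have h1 : b * a' = 0 := by linarith [hdet]
        rcases mul_eq_zero.mp h1 with h | h
        · exact absurd h hb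
        · exact h
      apply hd (b' / b)
      rw [hdr, hcr, ha']
      apply ext_F
      push_cast
      simp only [qF_coe, sF_coe]
      push_cast
      field_simp
      ring
    · apply hd (a' / a)
      rw [hdr, hcr]
      apply ext_F
      have hdetR : (a : ℝ) * b' - b * a' = 0 := by exact_mod_cast hdet
      have haR : (a : ℝ) ≠ 0 := by exact_mod_cast ha
      push_cast
      simp only [qF_coe, sF_coe]
      push_cast
      field_simp
      linear_combination Real.sqrt 2 * hdetR
  refine ⟨(p0 * b' - q0 * a') / (a * b' - b * a'), (a * q0 - b * p0) / (a * b' - b * a'), ?_⟩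
  rw [her, hcr, hdr]
  apply ext_F
  have hdetR : (a : ℝ) * b' - b * a' ≠ 0 := by exact_mod_cast hdet
  push_cast
  simp only [qF_coe, sF_coe]
  push_cast
  have hdetR' : (b' : ℝ) * a - a' * b ≠ 0 := by contrapose! hdetR; linarith
  field_simp
  ring
end Aux

noncomputable section RB

open PowerSeries

unseal QPlusM in
lemma mem_QPlusM_iff {f : PowerSeries QSqrt2} :
    f ∈ QPlusM ↔ ∃ q : ℚ, qF q = constantCoeff (R := QSqrt2) f := by
  unfold QPlusM
  rw [Subring.mem_comap, RingHom.mem_range]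
  rfl

lemma X_mul_mem (v : PowerSeries QSqrt2) : (X : PowerSeries QSqrt2) * v ∈ QPlusM :=
  mem_QPlusM_iff.mpr ⟨0, by simp [qF]⟩

lemma X_mem : (X : PowerSeries QSqrt2) ∈ QPlusM :=
  mem_QPlusM_iff.mpr ⟨0, by simp [qF]⟩

lemma Xpow_mul_mem (n : ℕ) (hn : 1 ≤ n) (v : PowerSeries QSqrt2) :
    (X : PowerSeries QSqrt2) ^ n * v ∈ QPlusM := by
  refine mem_QPlusM_iff.mpr ⟨0, ?_⟩
  simp [qF, map_mul, map_pow, constantCoeff_X, zero_pow (by omega : n ≠ 0)]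

lemma ratC_mem (q : ℚ) : (C (R := QSqrt2) (qF q) : PowerSeries QSqrt2) ∈ QPlusM :=
  mem_QPlusM_iff.mpr ⟨q, by simp⟩

theorem classify_ideal (I : Ideal QPlusM) (hI : I ≠ ⊥) :
    (∃ a : QPlusM, a ≠ 0 ∧ I = Ideal.span {a}) ∨
    (∃ n : ℕ, 1 ≤ n ∧ ∀ g : QPlusM,
      g ∈ I ↔ ∃ v : PowerSeries QSqrt2, (g : PowerSeries QSqrt2) = X ^ n * v) := by
  classical
  obtain ⟨f₀, hf₀I, hf₀⟩ := Submodule.exists_mem_ne_zero_of_ne_bot hI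
  have hf₀V : (f₀ : PowerSeries QSqrt2) ≠ 0 := fun h => hf₀ (Subtype.ext h)
  have hP : ∃ m : ℕ, ∃ g ∈ I, coeff (R := QSqrt2) m (g : PowerSeries QSqrt2) ≠ 0 := by
    by_contra h
    push_neg at h
    apply hf₀V
    ext m
    simpa using h m f₀ hf₀I
  set n := Nat.find hP with hn
  obtain ⟨f, hfI, hcf⟩ := Nat.find_spec hP
  set c := coeff (R := QSqrt2) n (f : PowerSeries QSqrt2) with hc
  have hc0 : c ≠ 0 := hcf
  have hlow : ∀ g ∈ I, ∀ m, m < n → coeff (R := QSqrt2) m (g : PowerSeries QSqrt2) = 0 := by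
    intro g hg m hm
    by_contra hne
    exact Nat.find_min hP hm ⟨g, hg, hne⟩
  have hdvd : ∀ g ∈ I, ∃ v : PowerSeries QSqrt2,
      (g : PowerSeries QSqrt2) = X ^ n * v := by
    intro g hg
    obtain ⟨v, hv⟩ := X_pow_dvd_iff.mpr (fun m hm => hlow g hg m hm)
    exact ⟨v, hv⟩
  obtain ⟨u, hu⟩ := hdvd f hfI
  have hcu : constantCoeff (R := QSqrt2) u = c := by
    rw [hc, hu]
    simpa using (coeff_X_pow_mul u n 0).symm
  have star : ∀ v : PowerSeries QSqrt2,
      (⟨X ^ (n+1) * v, Xpow_mul_mem (n+1) (by omega) v⟩ : QPlusM) ∈ I := by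
    intro v
    have huu : u * u⁻¹ = 1 := PowerSeries.mul_inv_cancel u (by rw [hcu]; exact hc0)
    have key : (f : PowerSeries QSqrt2) * (X * (u⁻¹ * v)) = X ^ (n+1) * v := by
      rw [hu]
      calc X ^ n * u * (X * (u⁻¹ * v)) = X ^ (n+1) * v * (u * u⁻¹) := by ring
        _ = X ^ (n+1) * v := by rw [huu, mul_one]
    have heq : f * ⟨X * (u⁻¹ * v), X_mul_mem _⟩
        = (⟨X ^ (n+1) * v, Xpow_mul_mem (n+1) (by omega) v⟩ : QPlusM) :=
      Subtype.ext key
    exact heq ▸ I.mul_mem_right _ hfI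
  by_cases hA : ∀ g ∈ I, ∃ q : ℚ, coeff (R := QSqrt2) n (g : PowerSeries QSqrt2) = qF q * c
  · left
    have haMem : ((C (R := QSqrt2) c) * X ^ n : PowerSeries QSqrt2) ∈ QPlusM := by
      rcases Nat.eq_zero_or_pos n with h | h
      · obtain ⟨q, hq⟩ := mem_QPlusM_iff.mp f.2
        refine mem_QPlusM_iff.mpr ⟨q, ?_⟩
        rw [h, pow_zero, mul_one, constantCoeff_C, hq, hc, h]
        exact (coeff_zero_eq_constantCoeff_apply (f : PowerSeries QSqrt2)).symm
      · refine mem_QPlusM_iff.mpr ⟨0, ?_⟩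
        simp [qF, map_mul, map_pow, constantCoeff_X, zero_pow (by omega : n ≠ 0)]
    set a : QPlusM := ⟨C (R := QSqrt2) c * X ^ n, haMem⟩ with ha
    refine ⟨a, ?_, ?_⟩
    · intro h0
      have h1 : (C (R := QSqrt2) c * X ^ n : PowerSeries QSqrt2) = 0 := congrArg Subtype.val h0
      rcases mul_eq_zero.mp h1 with h | h
      · exact hc0 (by simpa using congrArg (constantCoeff (R := QSqrt2)) h)
      · exact pow_ne_zero n X_ne_zero h
    · apply le_antisymm
      · intro g hg
        obtain ⟨q, hq⟩ := hA g hg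
        have hdvd2 : (X : PowerSeries QSqrt2) ^ (n+1)
            ∣ ((g : PowerSeries QSqrt2) - C (R := QSqrt2) (qF q * c) * X ^ n) := by
          rw [X_pow_dvd_iff]
          intro m hm
          rcases Nat.lt_succ_iff_lt_or_eq.mp hm with h | h
          · rw [map_sub, hlow g hg m h, coeff_C_mul, coeff_X_pow, if_neg (by omega)]
            ring
          · subst h
            rw [map_sub, hq, coeff_C_mul, coeff_X_pow, if_pos rfl]
            ring
        obtain ⟨w, hw⟩ := hdvd2
        rw [Ideal.mem_span_singleton']
        have hrmem : (C (R := QSqrt2) (qF q) + C (R := QSqrt2) c⁻¹ * (X * w) : PowerSeries QSqrt2) ∈ QPlusM := by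
          refine mem_QPlusM_iff.mpr ⟨q, ?_⟩
          simp
        refine ⟨⟨_, hrmem⟩, ?_⟩
        apply Subtype.ext
        show (C (R := QSqrt2) (qF q) + C (R := QSqrt2) c⁻¹ * (X * w)) * (C (R := QSqrt2) c * X ^ n)
          = (g : PowerSeries QSqrt2)
        have hCc : C (R := QSqrt2) c⁻¹ * C (R := QSqrt2) c = 1 := by
          rw [← map_mul, inv_mul_cancel₀ hc0, map_one]
        have hg' : (g : PowerSeries QSqrt2) = C (R := QSqrt2) (qF q * c) * X ^ n + X ^ (n+1) * w := by
          rw [← hw]; ring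
        rw [hg', map_mul]
        linear_combination ((X : PowerSeries QSqrt2) ^ (n+1) * w) * hCc
      · rw [Ideal.span_le, Set.singleton_subset_iff]
        have hdvd3 : (X : PowerSeries QSqrt2) ^ (n+1)
            ∣ ((f : PowerSeries QSqrt2) - (a : QPlusM)) := by
          rw [X_pow_dvd_iff]
          intro m hm
          rcases Nat.lt_succ_iff_lt_or_eq.mp hm with h | h
          · rw [map_sub, hlow f hfI m h, ha]
            show 0 - coeff (R := QSqrt2) m (C (R := QSqrt2) c * X ^ n) = 0
            rw [coeff_C_mul, coeff_X_pow, if_neg (by omega)]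
            ring
          · subst h
            rw [map_sub, ← hc, ha]
            show c - coeff (R := QSqrt2) n (C (R := QSqrt2) c * X ^ n) = 0
            rw [coeff_C_mul, coeff_X_pow, if_pos rfl]
            ring
        obtain ⟨w, hw⟩ := hdvd3
        have haf : a = f - ⟨X ^ (n+1) * w, Xpow_mul_mem (n+1) (by omega) w⟩ :=
          Subtype.ext (by
            show (a : PowerSeries QSqrt2) = (f : PowerSeries QSqrt2) - X ^ (n+1) * w
            rw [← hw]; ring)
        rw [SetLike.mem_coe, haf]
        exact I.sub_mem hfI (star w)
  · right
    push_neg at hA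
    obtain ⟨g₀, hg₀I, hd⟩ := hA
    set d := coeff (R := QSqrt2) n (g₀ : PowerSeries QSqrt2) with hdd
    have hn1 : 1 ≤ n := by
      by_contra h
      have hn0 : n = 0 := by omega
      obtain ⟨qc, hqc⟩ := mem_QPlusM_iff.mp f.2
      obtain ⟨qd, hqd⟩ := mem_QPlusM_iff.mp g₀.2
      have hqc' : qF qc = c := by
        rw [hqc, hc, hn0]
        exact (coeff_zero_eq_constantCoeff_apply (f : PowerSeries QSqrt2)).symm
      have hqd' : qF qd = d := by
        rw [hqd, hdd, hn0]
        exact (coeff_zero_eq_constantCoeff_apply (g₀ : PowerSeries QSqrt2)).symm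
      have hqc0 : qc ≠ 0 := by
        intro h0
        apply hc0
        rw [← hqc', h0]
        simp [qF]
      apply hd (qd / qc)
      have : qF (qd / qc) * qF qc = qF qd := by
        rw [← qF_mul]
        congr 1
        field_simp
      rw [← hqc', ← hqd', this]
    refine ⟨n, hn1, fun g => ⟨fun hg => hdvd g hg, ?_⟩⟩
    rintro ⟨v, hv⟩
    have hglow : ∀ m, m < n → coeff (R := QSqrt2) m (g : PowerSeries QSqrt2) = 0 :=
      fun m hm => X_pow_dvd_iff.mp ⟨v, hv⟩ m hm
    obtain ⟨p, q, hpq⟩ := solve_F hc0 hd (coeff (R := QSqrt2) n (g : PowerSeries QSqrt2))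
    have hdvd4 : (X : PowerSeries QSqrt2) ^ (n+1) ∣
        ((g : PowerSeries QSqrt2) - C (R := QSqrt2) (qF p) * (f : PowerSeries QSqrt2)
          - C (R := QSqrt2) (qF q) * (g₀ : PowerSeries QSqrt2)) := by
      rw [X_pow_dvd_iff]
      intro m hm
      rcases Nat.lt_succ_iff_lt_or_eq.mp hm with h | h
      · rw [map_sub, map_sub, coeff_C_mul, coeff_C_mul, hglow m h, hlow f hfI m h,
          hlow g₀ hg₀I m h]
        ring
      · subst h
        rw [map_sub, map_sub, coeff_C_mul, coeff_C_mul, hpq, ← hc, ← hdd]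
        ring
    obtain ⟨w, hw⟩ := hdvd4
    have hgeq : g = ⟨C (R := QSqrt2) (qF p), ratC_mem p⟩ * f + ⟨C (R := QSqrt2) (qF q), ratC_mem q⟩ * g₀
        + ⟨X ^ (n+1) * w, Xpow_mul_mem (n+1) (by omega) w⟩ := by
      apply Subtype.ext
      show (g : PowerSeries QSqrt2) = C (R := QSqrt2) (qF p) * (f : PowerSeries QSqrt2)
        + C (R := QSqrt2) (qF q) * (g₀ : PowerSeries QSqrt2) + X ^ (n+1) * w
      linear_combination hw
    rw [hgeq]
    exact I.add_mem (I.add_mem (I.mul_mem_left _ hfI) (I.mul_mem_left _ hg₀I)) (star w)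
end RB


noncomputable section KSec

open PowerSeries

def Xel : QPlusM := ⟨X, X_mem⟩

lemma Xel_ne_zero : (Xel : QPlusM) ≠ 0 := fun h =>
  X_ne_zero (congrArg Subtype.val h)

variable (K : Type) [Field K] [Algebra QPlusM K] [IsFractionRing QPlusM K]

lemma phi_injective : Function.Injective (algebraMap QPlusM K) :=
  IsFractionRing.injective QPlusM K

lemma xK_ne_zero : algebraMap QPlusM K Xel ≠ 0 := fun h =>
  Xel_ne_zero (phi_injective K (by rw [h, map_zero]))

/-- The canonical embedding of `V = F[[X]]` into the fraction field of `R`. -/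
def psi (v : PowerSeries QSqrt2) : K :=
  algebraMap QPlusM K ⟨X * v, X_mul_mem v⟩ * (algebraMap QPlusM K Xel)⁻¹

lemma x_mul_psi (v : PowerSeries QSqrt2) :
    algebraMap QPlusM K Xel * psi K v = algebraMap QPlusM K ⟨X * v, X_mul_mem v⟩ := by
  unfold psi
  rw [mul_comm (algebraMap QPlusM K Xel), mul_assoc, inv_mul_cancel₀ (xK_ne_zero K), mul_one]

lemma psi_coe (r : QPlusM) : psi K (r : PowerSeries QSqrt2) = algebraMap QPlusM K r := by
  have h1 : (⟨X * (r : PowerSeries QSqrt2), X_mul_mem _⟩ : QPlusM) = Xel * r := Subtype.ext rfl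
  unfold psi
  rw [h1, map_mul, mul_right_comm, mul_inv_cancel₀ (xK_ne_zero K), one_mul]

lemma psi_one : psi K 1 = 1 := by
  have : ((1 : PowerSeries QSqrt2)) = ((1 : QPlusM) : PowerSeries QSqrt2) := rfl
  rw [this, psi_coe, map_one]

lemma psi_zero : psi K 0 = 0 := by
  have : ((0 : PowerSeries QSqrt2)) = ((0 : QPlusM) : PowerSeries QSqrt2) := rfl
  rw [this, psi_coe, map_zero]

lemma psi_add (v w : PowerSeries QSqrt2) : psi K (v + w) = psi K v + psi K w := by
  have h1 : (⟨X * (v + w), X_mul_mem _⟩ : QPlusM)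
      = ⟨X * v, X_mul_mem v⟩ + ⟨X * w, X_mul_mem w⟩ := Subtype.ext (mul_add X v w)
  unfold psi
  rw [h1, map_add, add_mul]

lemma psi_mul (v w : PowerSeries QSqrt2) : psi K (v * w) = psi K v * psi K w := by
  have key : algebraMap QPlusM K ⟨X * (v * w), X_mul_mem _⟩ * algebraMap QPlusM K Xel
      = algebraMap QPlusM K ⟨X * v, X_mul_mem v⟩ * algebraMap QPlusM K ⟨X * w, X_mul_mem w⟩ := by
    rw [← map_mul, ← map_mul]
    exact congrArg _ (Subtype.ext (by
      show (X * (v * w)) * X = (X * v) * (X * w)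
      ring))
  unfold psi
  rw [mul_mul_mul_comm, ← key]
  have hx := xK_ne_zero K
  field_simp
lemma psi_injective {v w : PowerSeries QSqrt2} (h : psi K v = psi K w) : v = w := by
  unfold psi at h
  have h2 := mul_right_cancel₀ (inv_ne_zero (xK_ne_zero K)) h
  have h3 := congrArg Subtype.val (phi_injective K h2)
  exact mul_left_cancel₀ X_ne_zero h3

lemma psi_smul (r : QPlusM) (v : PowerSeries QSqrt2) :
    r • psi K v = psi K ((r : PowerSeries QSqrt2) * v) := by
  rw [Algebra.smul_def, ← psi_coe, ← psi_mul]

lemma psi_X : psi K (X : PowerSeries QSqrt2) = algebraMap QPlusM K Xel := psi_coe K Xel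

lemma psi_Xpow_mul (n : ℕ) (v : PowerSeries QSqrt2) :
    psi K (X ^ n * v) = (algebraMap QPlusM K Xel) ^ n * psi K v := by
  induction n generalizing v with
  | zero => rw [pow_zero, one_mul, pow_zero, one_mul]
  | succ m ih =>
    have h : (X : PowerSeries QSqrt2) ^ (m + 1) * v = X ^ m * (X * v) := by ring
    rw [h, ih, psi_mul, psi_X]
    ring

/-- The submodule `c • ψ(V)` of `K`. -/
def genW (c : K) : Submodule QPlusM K where
  carrier := {k | ∃ v : PowerSeries QSqrt2, k = c * psi K v}
  add_mem' := by
    rintro a b ⟨v, rfl⟩ ⟨w, rfl⟩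
    exact ⟨v + w, by rw [psi_add]; ring⟩
  zero_mem' := ⟨0, by rw [psi_zero]; ring⟩
  smul_mem' := by
    rintro r a ⟨v, rfl⟩
    refine ⟨(r : PowerSeries QSqrt2) * v, ?_⟩
    rw [← psi_smul, Algebra.smul_def, Algebra.smul_def]
    ring

lemma mem_genW {c k : K} : k ∈ genW K c ↔ ∃ v : PowerSeries QSqrt2, k = c * psi K v := Iff.rfl

lemma genW_div_genW (c : K) (hc : c ≠ 0) : genW K c / genW K c = genW K 1 := by
  ext k
  rw [Submodule.mem_div_iff_forall_mul_mem]
  constructor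
  · intro h
    obtain ⟨w, hw⟩ := h (c * psi K 1) ⟨1, rfl⟩
    rw [psi_one, mul_one, mul_comm c (psi K w)] at hw
    exact ⟨w, by rw [one_mul]; exact mul_right_cancel₀ hc hw⟩
  · rintro ⟨w, rfl⟩ m ⟨v, rfl⟩
    exact ⟨w * v, by rw [psi_mul]; ring⟩

lemma genW_one_div (c : K) (hc : c ≠ 0) : genW K 1 / genW K c = genW K c⁻¹ := by
  ext k
  rw [Submodule.mem_div_iff_forall_mul_mem]
  constructor
  · intro h
    obtain ⟨w, hw⟩ := h (c * psi K 1) ⟨1, rfl⟩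
    rw [psi_one, mul_one, one_mul] at hw
    refine ⟨w, ?_⟩
    rw [← hw]
    field_simp
  · rintro ⟨w, rfl⟩ m ⟨v, rfl⟩
    refine ⟨w * v, ?_⟩
    rw [psi_mul]
    field_simp

lemma genW_mul_inv (c : K) (hc : c ≠ 0) : genW K c * genW K c⁻¹ = genW K 1 := by
  apply le_antisymm
  · rw [Submodule.mul_le]
    rintro m ⟨v, rfl⟩ m' ⟨w, rfl⟩
    refine ⟨v * w, ?_⟩
    rw [psi_mul]
    field_simp
  · rintro k ⟨w, rfl⟩
    have h := Submodule.mul_mem_mul (M := genW K c) (N := genW K c⁻¹)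
      (⟨w, rfl⟩ : c * psi K w ∈ genW K c) (⟨1, rfl⟩ : c⁻¹ * psi K 1 ∈ genW K c⁻¹)
    have he : (c * psi K w) * (c⁻¹ * psi K 1) = 1 * psi K w := by
      rw [psi_one]
      field_simp
    rwa [he] at h

lemma map_span_singleton (a : QPlusM) :
    Submodule.map (Algebra.linearMap QPlusM K) (Ideal.span {a})
      = Submodule.span QPlusM {algebraMap QPlusM K a} := by
  rw [Ideal.span, Submodule.map_span, Set.image_singleton, Algebra.linearMap_apply]

/-- The inverse of a principal fractional ideal. -/
def Jinv (a : QPlusM) : Submodule QPlusM K where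
  carrier := {k | ∃ t : QPlusM, k = algebraMap QPlusM K t * (algebraMap QPlusM K a)⁻¹}
  add_mem' := by
    rintro x y ⟨t, rfl⟩ ⟨t', rfl⟩
    exact ⟨t + t', by rw [map_add]; ring⟩
  zero_mem' := ⟨0, by rw [map_zero]; ring⟩
  smul_mem' := by
    rintro r x ⟨t, rfl⟩
    refine ⟨r * t, ?_⟩
    rw [map_mul, Algebra.smul_def]
    ring

lemma span_div_self (a : QPlusM) (ha : algebraMap QPlusM K a ≠ 0) :
    Submodule.span QPlusM {algebraMap QPlusM K a} / Submodule.span QPlusM {algebraMap QPlusM K a}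
      = (1 : Submodule QPlusM K) := by
  ext k
  rw [Submodule.mem_div_iff_forall_mul_mem, Submodule.mem_one]
  constructor
  · intro h
    obtain ⟨r, hr⟩ := Submodule.mem_span_singleton.mp
      (h (algebraMap QPlusM K a) (Submodule.subset_span rfl))
    rw [Algebra.smul_def] at hr
    exact ⟨r, by rw [← mul_right_cancel₀ ha hr]⟩
  · rintro ⟨r, rfl⟩ m hm
    obtain ⟨r', hr'⟩ := Submodule.mem_span_singleton.mp hm
    rw [← hr', Algebra.smul_def]
    apply Submodule.mem_span_singleton.mpr
    exact ⟨r * r', by rw [Algebra.smul_def, map_mul]; ring⟩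

lemma one_div_span (a : QPlusM) (ha : algebraMap QPlusM K a ≠ 0) :
    (1 : Submodule QPlusM K) / Submodule.span QPlusM {algebraMap QPlusM K a} = Jinv K a := by
  ext k
  rw [Submodule.mem_div_iff_forall_mul_mem]
  constructor
  · intro h
    obtain ⟨t, ht⟩ := Submodule.mem_one.mp (h (algebraMap QPlusM K a) (Submodule.subset_span rfl))
    exact ⟨t, by rw [ht]; field_simp⟩
  · rintro ⟨t, rfl⟩ m hm
    obtain ⟨r', hr'⟩ := Submodule.mem_span_singleton.mp hm
    rw [← hr', Algebra.smul_def]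
    apply Submodule.mem_one.mpr
    refine ⟨t * r', ?_⟩
    rw [map_mul]
    field_simp

lemma span_mul_Jinv (a : QPlusM) (ha : algebraMap QPlusM K a ≠ 0) :
    Submodule.span QPlusM {algebraMap QPlusM K a} * Jinv K a = (1 : Submodule QPlusM K) := by
  apply le_antisymm
  · rw [Submodule.mul_le]
    rintro m hm k ⟨t, rfl⟩
    obtain ⟨r', hr'⟩ := Submodule.mem_span_singleton.mp hm
    rw [← hr', Algebra.smul_def]
    apply Submodule.mem_one.mpr
    refine ⟨r' * t, ?_⟩
    rw [map_mul]
    field_simp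
  · rintro k hk
    obtain ⟨u, hu⟩ := Submodule.mem_one.mp hk
    have h := Submodule.mul_mem_mul (M := Submodule.span QPlusM {algebraMap QPlusM K a})
      (N := Jinv K a) (Submodule.subset_span rfl)
      (⟨u, rfl⟩ : algebraMap QPlusM K u * (algebraMap QPlusM K a)⁻¹ ∈ Jinv K a)
    have he : algebraMap QPlusM K a * (algebraMap QPlusM K u * (algebraMap QPlusM K a)⁻¹) = k := by
      rw [← hu]
      field_simp
    rwa [he] at h

end KSec

noncomputable section Pruf

open PowerSeries

def sXel : QPlusM := ⟨X * C (R := QSqrt2) sF, X_mul_mem _⟩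

variable (K : Type) [Field K] [Algebra QPlusM K] [IsFractionRing QPlusM K]

lemma map_I2 : Submodule.map (Algebra.linearMap QPlusM K) (Ideal.span {Xel, sXel})
    = genW K (algebraMap QPlusM K Xel) := by
  rw [Ideal.span, Submodule.map_span]
  apply le_antisymm
  · rw [Submodule.span_le]
    rintro k ⟨g, hg, rfl⟩
    rcases hg with rfl | rfl
    · exact ⟨1, by rw [psi_one, mul_one, Algebra.linearMap_apply]⟩
    · refine ⟨C (R := QSqrt2) sF, ?_⟩
      rw [Algebra.linearMap_apply, x_mul_psi]
      rfl
  · rintro k ⟨v, rfl⟩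
    obtain ⟨p, q, hpq⟩ := repr_F (constantCoeff (R := QSqrt2) v)
    have hr₁mem : (v - C (R := QSqrt2) sF * C (R := QSqrt2) (qF q) : PowerSeries QSqrt2) ∈ QPlusM := by
      refine mem_QPlusM_iff.mpr ⟨p, ?_⟩
      rw [map_sub, map_mul, constantCoeff_C, constantCoeff_C, hpq]
      ring
    set r₁ : QPlusM := ⟨v - C (R := QSqrt2) sF * C (R := QSqrt2) (qF q), hr₁mem⟩ with hr₁
    set r₂ : QPlusM := ⟨C (R := QSqrt2) (qF q), ratC_mem q⟩ with hr₂
    have hsum : algebraMap QPlusM K Xel * psi K v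
        = r₁ • (Algebra.linearMap QPlusM K Xel) + r₂ • (Algebra.linearMap QPlusM K sXel) := by
      rw [Algebra.linearMap_apply, Algebra.linearMap_apply, Algebra.smul_def, Algebra.smul_def,
        ← psi_coe K r₁, ← psi_coe K r₂, ← psi_coe K Xel, ← psi_coe K sXel,
        ← psi_mul, ← psi_mul, ← psi_mul]
      rw [← psi_add]
      apply congrArg
      show X * v = (v - C (R := QSqrt2) sF * C (R := QSqrt2) (qF q)) * X
        + C (R := QSqrt2) (qF q) * (X * C (R := QSqrt2) sF)
      ring
    rw [hsum]
    exact Submodule.add_mem _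
      (Submodule.smul_mem _ _ (Submodule.subset_span ⟨Xel, Or.inl rfl, rfl⟩))
      (Submodule.smul_mem _ _ (Submodule.subset_span ⟨sXel, Or.inr rfl, rfl⟩))

lemma one_div_genW_x :
    (1 : Submodule QPlusM K) / genW K (algebraMap QPlusM K Xel) = genW K 1 := by
  ext k
  rw [Submodule.mem_div_iff_forall_mul_mem]
  constructor
  · intro h
    obtain ⟨r, hr⟩ := Submodule.mem_one.mp
      (h (algebraMap QPlusM K Xel * psi K 1) ⟨1, rfl⟩)
    rw [psi_one, mul_one] at hr
    obtain ⟨t, ht⟩ := Submodule.mem_one.mp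
      (h (algebraMap QPlusM K Xel * psi K (C (R := QSqrt2) sF)) ⟨C (R := QSqrt2) sF, rfl⟩)
    -- hr : φ r = k * x,  ht : φ t = k * (x * ψ s̃)
    have hts : psi K ((t : PowerSeries QSqrt2)) = psi K ((r : PowerSeries QSqrt2) * C (R := QSqrt2) sF) := by
      rw [psi_mul, psi_coe, psi_coe, ht, hr]
      ring
    have htv : (t : PowerSeries QSqrt2) = (r : PowerSeries QSqrt2) * C (R := QSqrt2) sF :=
      psi_injective K hts
    obtain ⟨qr, hqr⟩ := mem_QPlusM_iff.mp r.2
    obtain ⟨qt, hqt⟩ := mem_QPlusM_iff.mp t.2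
    have hconst : qF qt = qF qr * sF := by
      rw [hqt, htv, map_mul, constantCoeff_C, ← hqr]
    have hqr0 : qr = 0 := by
      by_contra hqr0
      have hqrF : qF qr ≠ 0 := by
        intro hh
        apply hqr0
        simpa [qF, _root_.map_eq_zero] using hh
      apply sF_not_rat (qt / qr)
      have hmul : qF (qt / qr) * qF qr = qF qt := by
        rw [← qF_mul]
        congr 1
        field_simp
      rw [hconst] at hmul
      exact mul_right_cancel₀ hqrF (by rw [hmul]; ring)
    have hr0 : constantCoeff (R := QSqrt2) (r : PowerSeries QSqrt2) = 0 := by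
      rw [← hqr, hqr0]
      simp [qF]
    obtain ⟨w, hw⟩ := X_dvd_iff.mpr hr0
    refine ⟨w, ?_⟩
    have h1 : algebraMap QPlusM K r = algebraMap QPlusM K Xel * psi K w := by
      rw [x_mul_psi]
      exact congrArg _ (Subtype.ext hw)
    rw [one_mul]
    have h2 : k * algebraMap QPlusM K Xel = psi K w * algebraMap QPlusM K Xel := by
      rw [← hr, h1]; ring
    exact mul_right_cancel₀ (xK_ne_zero K) h2
  · rintro ⟨w, rfl⟩ m ⟨v, rfl⟩
    apply Submodule.mem_one.mpr
    refine ⟨⟨X * (w * v), X_mul_mem _⟩, ?_⟩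
    rw [← x_mul_psi, psi_mul]
    ring

lemma genW_x_mul_one :
    genW K (algebraMap QPlusM K Xel) * genW K 1 = genW K (algebraMap QPlusM K Xel) := by
  apply le_antisymm
  · rw [Submodule.mul_le]
    rintro m ⟨v, rfl⟩ m' ⟨w, rfl⟩
    refine ⟨v * w, ?_⟩
    rw [psi_mul]
    ring
  · rintro k ⟨v, rfl⟩
    have h := Submodule.mul_mem_mul (M := genW K (algebraMap QPlusM K Xel)) (N := genW K 1)
      (⟨v, rfl⟩ : algebraMap QPlusM K Xel * psi K v ∈ genW K (algebraMap QPlusM K Xel))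
      (⟨1, rfl⟩ : (1 : K) * psi K 1 ∈ genW K 1)
    have he : (algebraMap QPlusM K Xel * psi K v) * (1 * psi K 1)
        = algebraMap QPlusM K Xel * psi K v := by
      rw [psi_one]
      ring
    rwa [he] at h

lemma genW_x_ne_one : genW K (algebraMap QPlusM K Xel) ≠ (1 : Submodule QPlusM K) := by
  intro h
  have h1 : (1 : K) ∈ genW K (algebraMap QPlusM K Xel) := by
    rw [h]
    exact Submodule.mem_one.mpr ⟨1, map_one _⟩
  obtain ⟨v, hv⟩ := h1
  rw [x_mul_psi] at hv
  have h2 : (⟨X * v, X_mul_mem v⟩ : QPlusM) = 1 := by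
    apply phi_injective K
    rw [map_one, ← hv]
  have h3 : (X * v : PowerSeries QSqrt2) = 1 := congrArg Subtype.val h2
  have h4 := congrArg (constantCoeff (R := QSqrt2)) h3
  simp at h4

end Pruf

/-- `R = ℚ + X·ℚ(√2)[[X]]` is a stable domain (every nonzero ideal is invertible over
its endomorphism ring, computed in the quotient field `K`), but `R` is not a Prüfer
domain (some nonzero finitely generated ideal `I` satisfies `I·(R : I) ≠ R`). -/
theorem qPlusM_stable_not_prufer
    (K : Type) [Field K] [Algebra QPlusM K] [IsFractionRing QPlusM K] :
    (∀ I : Ideal QPlusM, I ≠ ⊥ →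
      (Submodule.map (Algebra.linearMap QPlusM K) I) *
        (((Submodule.map (Algebra.linearMap QPlusM K) I) /
            (Submodule.map (Algebra.linearMap QPlusM K) I)) /
          (Submodule.map (Algebra.linearMap QPlusM K) I)) =
      (Submodule.map (Algebra.linearMap QPlusM K) I) /
        (Submodule.map (Algebra.linearMap QPlusM K) I)) ∧
    ¬ (∀ I : Ideal QPlusM, I ≠ ⊥ → I.FG →
      (Submodule.map (Algebra.linearMap QPlusM K) I) *
        (1 / (Submodule.map (Algebra.linearMap QPlusM K) I)) =
      (1 : Submodule QPlusM K)) := by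
  constructor
  · intro I hI
    rcases classify_ideal I hI with ⟨a, ha, rfl⟩ | ⟨n, hn1, hiff⟩
    · have han : algebraMap QPlusM K a ≠ 0 := fun h =>
        ha (phi_injective K (by rw [h, map_zero]))
      rw [map_span_singleton, span_div_self K a han, one_div_span K a han, span_mul_Jinv K a han]
    · have hmap : Submodule.map (Algebra.linearMap QPlusM K) I
          = genW K ((algebraMap QPlusM K Xel) ^ n) := by
        ext k
        simp only [Submodule.mem_map]
        constructor
        · rintro ⟨g, hgI, rfl⟩
          obtain ⟨v, hv⟩ := (hiff g).mp hgI
          refine ⟨v, ?_⟩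
          rw [Algebra.linearMap_apply, ← psi_coe, hv, psi_Xpow_mul]
        · rintro ⟨v, rfl⟩
          refine ⟨⟨PowerSeries.X ^ n * v, Xpow_mul_mem n hn1 v⟩, (hiff _).mpr ⟨v, rfl⟩, ?_⟩
          rw [Algebra.linearMap_apply, ← psi_coe]
          exact psi_Xpow_mul K n v
      have hxn : (algebraMap QPlusM K Xel) ^ n ≠ 0 := pow_ne_zero _ (xK_ne_zero K)
      rw [hmap, genW_div_genW K _ hxn, genW_one_div K _ hxn, genW_mul_inv K _ hxn]
  · intro h
    have hI2ne : Ideal.span {Xel, sXel} ≠ ⊥ := by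
      intro hbot
      apply Xel_ne_zero
      have : Xel ∈ Ideal.span {Xel, sXel} := Ideal.subset_span (Or.inl rfl)
      rwa [hbot, Ideal.mem_bot] at this
    have hfg : (Ideal.span {Xel, sXel}).FG := by
      classical
      exact ⟨{Xel, sXel}, by simp⟩
    have h2 := h _ hI2ne hfg
    rw [map_I2, one_div_genW_x, genW_x_mul_one] at h2
    exact genW_x_ne_one K h2
end

section
/- Let V be a valuation domain in which every nonzero nonmaximal prime ideal is not idempotent. Then for every nonzero fractional ideal I of V, the generalized Ratliff-Rush closure Î = {x ∈ K | xI^n ⊆ I^{n+1} for some n ≥ 1} equals the divisorial closure I_v = (V : (V : I)). -/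
open scoped nonZeroDivisors

open FractionalIdeal IsLocalRing

/-- Total divisibility in the fraction field of a valuation domain. -/
private theorem aux_div_total {V : Type*} [CommRing V] [IsDomain V] [ValuationRing V]
    (a b : FractionRing V) :
    (∃ c : V, b = a * algebraMap V (FractionRing V) c) ∨
    (∃ c : V, a = b * algebraMap V (FractionRing V) c) := by
  by_cases ha : a = 0
  · by_cases hb : b = 0
    · exact Or.inl ⟨0, by simp [ha, hb]⟩
    · exact Or.inr ⟨0, by simp [ha]⟩
  rcases ValuationRing.isInteger_or_isInteger V (a⁻¹ * b) with ⟨c, hc⟩ | ⟨c, hc⟩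
  · refine Or.inl ⟨c, ?_⟩
    rw [hc]
    field_simp
  · by_cases hb : b = 0
    · exact Or.inl ⟨0, by simp [hb]⟩
    · refine Or.inr ⟨c, ?_⟩
      rw [hc, mul_inv, inv_inv]
      field_simp

private theorem aux_pow_mem {R : Type*} [CommRing R] {P : Type*} [CommRing P] [Algebra R P]
    {S : Submonoid R} {J : FractionalIdeal S P} {w : P} (hw : w ∈ J) (m : ℕ) :
    w ^ m ∈ J ^ m := by
  induction m with
  | zero => rw [pow_zero, pow_zero]; exact one_mem_one S
  | succ k ih =>
    rw [pow_succ, pow_succ]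
    exact FractionalIdeal.mul_mem_mul ih hw

/-- A nonzero proper idempotent ideal of a valuation domain is the maximal ideal,
provided no nonzero nonmaximal prime is idempotent. -/
private theorem aux_idem {V : Type*} [CommRing V] [IsDomain V] [ValuationRing V]
    (h : ∀ P : Ideal V, P.IsPrime → P ≠ ⊥ → P ≠ IsLocalRing.maximalIdeal V → P * P ≠ P)
    (E : Ideal V) (hbot : E ≠ ⊥) (htop : E ≠ ⊤) (hEE : E * E = E) :
    E = IsLocalRing.maximalIdeal V := by
  have hprime : E.IsPrime := by
    refine ⟨htop, ?_⟩
    intro a b hab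
    by_contra hcon
    push_neg at hcon
    obtain ⟨haE, hbE⟩ := hcon
    have ha0 : a ≠ 0 := fun h0 => haE (h0 ▸ E.zero_mem)
    have hb0 : b ≠ 0 := fun h0 => hbE (h0 ▸ E.zero_mem)
    have key : ∀ c : V, c ∉ E → E ≤ Ideal.span {c} * maximalIdeal V := by
      intro c hcE e he
      rcases ValuationRing.cond c e with ⟨d, hd | hd⟩
      · -- c * d = e
        have hdM : d ∈ maximalIdeal V := by
          rw [mem_maximalIdeal]
          intro hu
          rcases hu with ⟨u, rfl⟩
          refine hcE ?_
          have hc : c = e * ↑u⁻¹ := by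
            rw [← hd, Units.mul_inv_cancel_right]
          rw [hc]
          exact E.mul_mem_right _ he
        exact hd ▸ Ideal.mul_mem_mul (Ideal.mem_span_singleton_self c) hdM
      · -- e * d = c
        exact absurd (hd ▸ E.mul_mem_right d he) hcE
    have h1 : E * E ≤ Ideal.span {a * b} * maximalIdeal V := by
      calc E * E ≤ (Ideal.span {a} * maximalIdeal V) * (Ideal.span {b} * maximalIdeal V) :=
            Ideal.mul_mono (key a haE) (key b hbE)
        _ = Ideal.span {a} * Ideal.span {b} * (maximalIdeal V * maximalIdeal V) := by ring
        _ ≤ Ideal.span {a} * Ideal.span {b} * maximalIdeal V :=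
            Ideal.mul_mono_right Ideal.mul_le_left
        _ = Ideal.span {a * b} * maximalIdeal V := by
            rw [Ideal.span_singleton_mul_span_singleton]
    have hab' : a * b ∈ E * E := by rw [hEE]; exact hab
    have h2 : a * b ∈ Ideal.span {a * b} * maximalIdeal V := h1 hab'
    obtain ⟨z, hzM, hz⟩ := Ideal.mem_span_singleton_mul.mp h2
    have hz1 : z = 1 := by
      have hab0 : a * b ≠ 0 := mul_ne_zero ha0 hb0
      have heq : (a * b) * z = (a * b) * 1 := by rw [mul_one, hz]
      exact mul_left_cancel₀ hab0 heq
    rw [hz1] at hzM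
    exact (maximalIdeal.isMaximal V).ne_top ((Ideal.eq_top_iff_one _).mpr hzM)
  by_cases hmax : E = maximalIdeal V
  · exact hmax
  · exact absurd hEE (h E hprime hbot hmax)

set_option maxHeartbeats 1000000 in
/-- If no nonzero nonmaximal prime of a valuation domain `V` is idempotent, then for
every nonzero fractional ideal `I` of `V`, the generalized Ratliff-Rush closure
`Î = {x ∈ K | x·Iⁿ ⊆ I^{n+1} for some n ≥ 1}` equals the divisorial closure
`I_v = (V : (V : I))`. -/
theorem genRatliffRush_eq_divisorial {V : Type*} [CommRing V] [IsDomain V]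
    [ValuationRing V]
    (h : ∀ P : Ideal V, P.IsPrime → P ≠ ⊥ → P ≠ IsLocalRing.maximalIdeal V → P * P ≠ P)
    (I : FractionalIdeal V⁰ (FractionRing V)) (hI : I ≠ 0) :
    ∀ x : FractionRing V,
      (∃ n : ℕ, 1 ≤ n ∧ ∀ y ∈ I ^ n, x * y ∈ I ^ (n + 1)) ↔ x ∈ 1 / (1 / I) := by
  set K := FractionRing V with hK
  -- 1/I is nonzero
  have hInz : (1 / I : FractionalIdeal V⁰ K) ≠ 0 := by
    obtain ⟨a, haS, haI⟩ := I.isFractional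
    have ha0 : (a : V) ≠ 0 := nonZeroDivisors.ne_zero haS
    have hmem : algebraMap V K a ∈ (1 / I : FractionalIdeal V⁰ K) := by
      rw [mem_div_iff_of_ne_zero hI]
      intro y hy
      obtain ⟨c, hc⟩ := haI y hy
      refine (mem_one_iff _).mpr ⟨c, ?_⟩
      rw [hc, Algebra.smul_def]
    intro h0
    rw [h0] at hmem
    have : algebraMap V K a = 0 := by simpa using hmem
    exact ha0 (by
      apply IsFractionRing.injective V K
      rw [this, _root_.map_zero])
  intro x
  constructor
  · -- forward: Ratliff-Rush ⟹ divisorial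
    rintro ⟨n, hn, hxn⟩
    rw [mem_div_iff_of_ne_zero hInz]
    intro y hy
    have hyI : ∀ a ∈ I, y * a ∈ (1 : FractionalIdeal V⁰ K) :=
      (mem_div_iff_of_ne_zero hI).mp hy
    by_contra hz
    have hz0 : x * y ≠ 0 := fun h0 => hz (by rw [h0]; exact zero_mem _)
    have hx0 : x ≠ 0 := fun h0 => hz0 (by rw [h0, zero_mul])
    have hy0 : y ≠ 0 := fun h0 => hz0 (by rw [h0, mul_zero])
    obtain ⟨π, hπ⟩ : ∃ π : V, algebraMap V K π = (x * y)⁻¹ := by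
      rcases ValuationRing.isInteger_or_isInteger V (x * y) with ⟨c, hc⟩ | ⟨c, hc⟩
      · exact absurd ((mem_one_iff _).mpr ⟨c, hc⟩) hz
      · exact ⟨c, hc⟩
    set J : FractionalIdeal V⁰ K := spanSingleton V⁰ y * I with hJdef
    have hJle : J ≤ 1 := by
      intro g hg
      obtain ⟨a, haI, rfl⟩ := mem_singleton_mul.mp hg
      exact hyI a haI
    have hpow : ∀ m : ℕ, (J ^ m : FractionalIdeal V⁰ K) ≤ 1 := by
      intro m
      induction m with
      | zero => rw [pow_zero]
      | succ k ih =>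
        rw [pow_succ]
        calc J ^ k * J ≤ 1 * J := mul_left_mono (a := J) ih
          _ = J := one_mul J
          _ ≤ 1 := hJle
    have hJm : ∀ m : ℕ, (J ^ m : FractionalIdeal V⁰ K) =
        spanSingleton V⁰ (y ^ m) * I ^ m := by
      intro m
      rw [hJdef, mul_pow, spanSingleton_pow]
    -- the key containment
    have hkey : spanSingleton V⁰ (x * y) * J ^ n ≤ J ^ (n + 1) := by
      intro g hg
      obtain ⟨w, hw, rfl⟩ := mem_singleton_mul.mp hg
      rw [hJm n] at hw
      obtain ⟨a, haI, rfl⟩ := mem_singleton_mul.mp hw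
      rw [hJm (n + 1)]
      exact mem_singleton_mul.mpr ⟨x * a, hxn a haI, by ring⟩
    -- E = J^n satisfies J * E = E
    have hEle : J ^ n ≤ J * J ^ n := by
      have e1 : (J ^ n : FractionalIdeal V⁰ K) =
          spanSingleton V⁰ ((x * y)⁻¹) * (spanSingleton V⁰ (x * y) * J ^ n) := by
        rw [← mul_assoc, spanSingleton_mul_spanSingleton, inv_mul_cancel₀ hz0,
          spanSingleton_one, one_mul]
      refine e1.trans_le ?_
      calc spanSingleton V⁰ ((x * y)⁻¹) * (spanSingleton V⁰ (x * y) * J ^ n)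
          ≤ spanSingleton V⁰ ((x * y)⁻¹) * J ^ (n + 1) := mul_right_mono hkey
        _ ≤ 1 * J ^ (n + 1) := by
            refine mul_left_mono ?_
            rw [← hπ]
            exact spanSingleton_le_iff_mem.mpr ((mem_one_iff _).mpr ⟨π, rfl⟩)
        _ = J ^ (n + 1) := one_mul _
        _ = J * J ^ n := by rw [pow_succ, mul_comm]
    have hJE : J * J ^ n = J ^ n :=
      le_antisymm (by
        calc J * J ^ n ≤ 1 * J ^ n := mul_left_mono hJle
          _ = J ^ n := one_mul _) hEle
    have hEE : (J ^ n) * (J ^ n) = (J ^ n : FractionalIdeal V⁰ K) := by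
      have haux : ∀ m : ℕ, J ^ m * J ^ n = J ^ n := by
        intro m
        induction m with
        | zero => rw [pow_zero, one_mul]
        | succ k ih => rw [pow_succ, mul_comm (J ^ k) J, mul_assoc, ih, hJE]
      exact haux n
    have h1E : (1 : K) ∉ (J ^ n : FractionalIdeal V⁰ K) := by
      intro h1
      refine hz ?_
      have hmm : x * y * 1 ∈ spanSingleton V⁰ (x * y) * J ^ n :=
        mul_mem_mul (mem_spanSingleton_self _ _) h1
      have h2 := hkey hmm
      rw [mul_one] at h2
      exact hpow (n + 1) h2
    obtain ⟨E₀, hE₀⟩ := le_one_iff_exists_coeIdeal.mp (hpow n)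
    -- E₀ is nonzero
    obtain ⟨a₀, ha₀I, ha₀0⟩ : ∃ a₀ ∈ I, a₀ ≠ (0 : K) := by
      by_contra hcon
      push_neg at hcon
      exact hI (eq_zero_iff.mpr hcon)
    have hEbot : E₀ ≠ ⊥ := by
      intro hb
      rw [hb, coeIdeal_bot] at hE₀
      have hyin : y * a₀ ∈ J := mem_singleton_mul.mpr ⟨a₀, ha₀I, rfl⟩
      have hmem : (y * a₀) ^ n ∈ (J ^ n : FractionalIdeal V⁰ K) := aux_pow_mem hyin n
      rw [← hE₀] at hmem
      have : (y * a₀) ^ n = 0 := by simpa using hmem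
      exact pow_ne_zero n (mul_ne_zero hy0 ha₀0) this
    have hEtop : E₀ ≠ ⊤ := by
      intro ht
      rw [ht, coeIdeal_top] at hE₀
      exact h1E (hE₀ ▸ one_mem_one V⁰)
    have hE₀EE : E₀ * E₀ = E₀ := by
      apply FractionalIdeal.coeIdeal_injective (K := K)
      show ((E₀ * E₀ : Ideal V) : FractionalIdeal V⁰ K) = ((E₀ : Ideal V) : FractionalIdeal V⁰ K)
      rw [coeIdeal_mul, hE₀, hEE]
    have hEmax : E₀ = maximalIdeal V := aux_idem h E₀ hEbot hEtop hE₀EE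
    -- π is a nonunit, hence in E₀; this forces 1 ∈ J^n, a contradiction
    have hπu : ¬IsUnit π := by
      intro hu
      rcases hu with ⟨u, rfl⟩
      refine hz ((mem_one_iff _).mpr ⟨↑u⁻¹, ?_⟩)
      have h1 : algebraMap V K ↑u⁻¹ * algebraMap V K ↑u = 1 := by
        rw [← _root_.map_mul, Units.inv_mul, _root_.map_one]
      rw [hπ] at h1
      exact (mul_inv_eq_one₀ hz0).mp h1
    have hπE : algebraMap V K π ∈ (J ^ n : FractionalIdeal V⁰ K) := by
      rw [← hE₀]
      exact (mem_coeIdeal _).mpr ⟨π, hEmax ▸ (mem_maximalIdeal π).mpr hπu, rfl⟩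
    have hone : (1 : K) ∈ (J ^ n : FractionalIdeal V⁰ K) := by
      have hmm : (x * y) * algebraMap V K π ∈ spanSingleton V⁰ (x * y) * J ^ n :=
        mul_mem_mul (mem_spanSingleton_self _ _) hπE
      have h2 := hkey hmm
      rw [hπ, mul_inv_cancel₀ hz0] at h2
      have h3 : (J ^ (n + 1) : FractionalIdeal V⁰ K) = J ^ n := by
        rw [pow_succ, mul_comm, hJE]
      rwa [h3] at h2
    exact h1E hone
  · -- reverse: divisorial ⟹ Ratliff-Rush
    intro hx
    by_cases hxI : x ∈ I
    · refine ⟨1, le_refl 1, fun y hy => ?_⟩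
      rw [pow_one] at hy
      have h2 : (I ^ (1 + 1) : FractionalIdeal V⁰ K) = I * I := by rw [pow_succ, pow_one]
      rw [h2]
      exact mul_mem_mul hxI hy
    · have hx0 : x ≠ 0 := fun h0 => hxI (by rw [h0]; exact zero_mem _)
      have hxdiv : ∀ w : K, (∀ a ∈ I, w * a ∈ (1 : FractionalIdeal V⁰ K)) →
          x * w ∈ (1 : FractionalIdeal V⁰ K) := fun w hw =>
        (mem_div_iff_of_ne_zero hInz).mp hx w ((mem_div_iff_of_ne_zero hI).mpr hw)
      set J : FractionalIdeal V⁰ K := spanSingleton V⁰ x⁻¹ * I with hJdef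
      have claimB : ∀ w : K, (∀ g ∈ J, w * g ∈ (1 : FractionalIdeal V⁰ K)) →
          ∃ u : V, algebraMap V K u = w := by
        intro w hw
        have hw' : ∀ a ∈ I, (w * x⁻¹) * a ∈ (1 : FractionalIdeal V⁰ K) := by
          intro a ha
          have := hw (x⁻¹ * a) (mem_singleton_mul.mpr ⟨a, ha, rfl⟩)
          rwa [← mul_assoc] at this
        have hmem := hxdiv _ hw'
        have hxw : x * (w * x⁻¹) = w := by
          rw [mul_comm w, ← mul_assoc, mul_inv_cancel₀ hx0, one_mul]
        rw [hxw] at hmem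
        exact (mem_one_iff _).mp hmem
      have hJ1 : J ≤ 1 := by
        intro g hg
        obtain ⟨a, haI, rfl⟩ := mem_singleton_mul.mp hg
        rcases aux_div_total x a with ⟨c, hc⟩ | ⟨c, hc⟩
        · refine (mem_one_iff _).mpr ⟨c, ?_⟩
          rw [hc, inv_mul_cancel_left₀ hx0]
        · exfalso
          refine hxI ?_
          have : x = c • a := by rw [hc, mul_comm, Algebra.smul_def]
          rw [this]
          exact FractionalIdeal.mem_coe.mp
            (Submodule.smul_mem (I : Submodule V K) c (FractionalIdeal.mem_coe.mpr haI))
      have h1J : (1 : K) ∉ J := by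
        intro h1
        obtain ⟨a, haI, ha⟩ := mem_singleton_mul.mp h1
        refine hxI ?_
        have hax : a = x := by
          have h2 : x * 1 = x * (x⁻¹ * a) := by rw [← ha]
          rw [mul_one, ← mul_assoc, mul_inv_cancel₀ hx0, one_mul] at h2
          exact h2.symm
        exact hax ▸ haI
      obtain ⟨J₀, hJ₀⟩ := le_one_iff_exists_coeIdeal.mp hJ1
      have hJ₀M : J₀ ≤ maximalIdeal V := by
        intro j hj
        rw [mem_maximalIdeal]
        intro hu
        have ht : J₀ = ⊤ := J₀.eq_top_of_isUnit_mem hj hu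
        rw [ht, coeIdeal_top] at hJ₀
        exact h1J (hJ₀ ▸ one_mem_one V⁰)
      have hMJ₀ : maximalIdeal V ≤ J₀ := by
        intro m hm
        by_contra hmJ
        have hm0 : m ≠ 0 := fun h0 => hmJ (h0 ▸ J₀.zero_mem)
        have hmK : algebraMap V K m ≠ 0 := fun h0 =>
          hm0 (IsFractionRing.injective V K (by rw [h0, _root_.map_zero]))
        obtain ⟨u, hu⟩ := claimB (algebraMap V K m)⁻¹ (by
          intro g hg
          rw [← hJ₀] at hg
          obtain ⟨j, hjJ, rfl⟩ := (mem_coeIdeal _).mp hg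
          rcases ValuationRing.cond m j with ⟨c, hc | hc⟩
          · refine (mem_one_iff _).mpr ⟨c, ?_⟩
            rw [← hc, _root_.map_mul, inv_mul_cancel_left₀ hmK]
          · exact absurd (hc ▸ J₀.mul_mem_right c hjJ) hmJ)
        have hmu : m * u = 1 := by
          apply IsFractionRing.injective V K
          rw [_root_.map_mul, _root_.map_one, hu, mul_inv_cancel₀ hmK]
        exact absurd (IsUnit.of_mul_eq_one u hmu) ((mem_maximalIdeal m).mp hm)
      have hJ₀eq : J₀ = maximalIdeal V := le_antisymm hJ₀M hMJ₀
      have hM2 : maximalIdeal V * maximalIdeal V = maximalIdeal V := by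
        refine le_antisymm Ideal.mul_le_left ?_
        intro m hm
        by_contra hm2
        have hm0 : m ≠ 0 := fun h0 => hm2 (h0 ▸ Ideal.zero_mem _)
        have hmK : algebraMap V K m ≠ 0 := fun h0 =>
          hm0 (IsFractionRing.injective V K (by rw [h0, _root_.map_zero]))
        have hdiv : ∀ e ∈ maximalIdeal V * maximalIdeal V, ∃ c : V, e = m * c := by
          intro e he
          rcases ValuationRing.cond m e with ⟨c, hc | hc⟩
          · exact ⟨c, hc.symm⟩
          · exact absurd (hc ▸ Ideal.mul_mem_right c _ he) hm2
        have hstep : ∀ a ∈ maximalIdeal V, ∃ c : V, a = m * c := by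
          intro a ha
          obtain ⟨u, hu⟩ := claimB ((algebraMap V K m)⁻¹ * algebraMap V K a) (by
            intro g hg
            rw [← hJ₀] at hg
            obtain ⟨b, hbJ, rfl⟩ := (mem_coeIdeal _).mp hg
            have hb : b ∈ maximalIdeal V := hJ₀eq ▸ hbJ
            obtain ⟨c, hc⟩ := hdiv (a * b) (Ideal.mul_mem_mul ha hb)
            refine (mem_one_iff _).mpr ⟨c, ?_⟩
            have heq : algebraMap V K a * algebraMap V K b =
                algebraMap V K m * algebraMap V K c := by
              rw [← _root_.map_mul, ← _root_.map_mul, ← hc]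
            rw [mul_assoc, heq, inv_mul_cancel_left₀ hmK])
          refine ⟨u, ?_⟩
          apply IsFractionRing.injective V K
          rw [_root_.map_mul, hu, mul_inv_cancel_left₀ hmK]
        obtain ⟨u, hu⟩ := claimB (algebraMap V K m)⁻¹ (by
          intro g hg
          rw [← hJ₀] at hg
          obtain ⟨b, hbJ, rfl⟩ := (mem_coeIdeal _).mp hg
          obtain ⟨c, hc⟩ := hstep b (hJ₀eq ▸ hbJ)
          refine (mem_one_iff _).mpr ⟨c, ?_⟩
          rw [hc, _root_.map_mul, inv_mul_cancel_left₀ hmK])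
        have hmu : m * u = 1 := by
          apply IsFractionRing.injective V K
          rw [_root_.map_mul, _root_.map_one, hu, mul_inv_cancel₀ hmK]
        exact absurd (IsUnit.of_mul_eq_one u hmu) ((mem_maximalIdeal m).mp hm)
      have hJJ : J * J = J := by
        rw [← hJ₀, ← coeIdeal_mul, hJ₀eq, hM2]
      have hIx : I = spanSingleton V⁰ x * J := by
        rw [hJdef, ← mul_assoc, spanSingleton_mul_spanSingleton,
          mul_inv_cancel₀ hx0, spanSingleton_one, one_mul]
      refine ⟨1, le_refl 1, fun a ha => ?_⟩
      rw [pow_one] at ha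
      have h2 : (I ^ (1 + 1) : FractionalIdeal V⁰ K) = spanSingleton V⁰ (x * x) * J := by
        rw [pow_succ, pow_one, hIx, mul_mul_mul_comm, spanSingleton_mul_spanSingleton, hJJ]
      have hmem : x⁻¹ * a ∈ J := mem_singleton_mul.mpr ⟨a, ha, rfl⟩
      rw [h2]
      refine mem_singleton_mul.mpr ⟨x⁻¹ * a, hmem, ?_⟩
      rw [mul_assoc, mul_inv_cancel_left₀ hx0]
end
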